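/- arXiv:1812.10834 — 2 statements merged into one kernel-verified Lean document; each statement's English description precedes it below -/
import Mathlib

section
/- Let (R, m) be a two-dimensional Noetherian regular local domain with m-adic completion Â, and let ϖ ∈ R be a prime element such that Â/ϖÂ is reduced. Let z ⊂ Â be a height-one prime ideal with z ∩ R = ϖR. Then for every nonzero a ∈ R, the valuation of a in the discrete valuation ring Â_z equals the valuation of a in the discrete valuation ring R_{(ϖ)}; in other words, the normalized discrete valuation of Â_z restricted to R coincides with the ϖ-adic valuation of R. -/
open IsLocalRing

/-- In a commutative ring, if `π` is a regular non-unit and `u` a unit, then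
`π ^ k * u` lies in the `n`-th power of the ideal `(π)` iff `n ≤ k`. -/
lemma aux_pow_mul_unit_mem_span_pow {S : Type*} [CommRing S] {π u : S} (hπ : ¬ IsUnit π)
    (hreg : ∀ x : S, π * x = 0 → x = 0) (hu : IsUnit u) (k n : ℕ) :
    π ^ k * u ∈ Ideal.span {π} ^ n ↔ n ≤ k := by
  have hregk : ∀ (m : ℕ) (x : S), π ^ m * x = 0 → x = 0 := by
    intro m
    induction m with
    | zero => intro x h; simpa using h
    | succ m ih =>
      intro x h
      apply ih
      apply hreg
      rw [← mul_assoc, mul_comm π (π ^ m)]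
      simpa [pow_succ, mul_assoc] using h
  rw [Ideal.span_singleton_pow, Ideal.mem_span_singleton]
  constructor
  · intro h
    by_contra hn
    push_neg at hn
    obtain ⟨c, hc⟩ := h
    have hc' : π ^ k * (u - π ^ (n - k) * c) = 0 := by
      have hnk : π ^ n = π ^ k * π ^ (n - k) := by
        rw [← pow_add]
        congr 1
        omega
      rw [mul_sub, hc, hnk]
      ring
    have h4 : u = π ^ (n - k) * c := by
      have := hregk k _ hc'
      linear_combination this
    apply hπ
    have hd : π ∣ u := by
      refine dvd_trans (dvd_pow_self π ?_) ⟨c, h4⟩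
      omega
    exact isUnit_of_dvd_unit hd hu
  · intro h
    exact dvd_mul_of_dvd_left (pow_dvd_pow π h) u

open TensorProduct in
/-- Multiplication by a nonzero element of a Noetherian domain is injective on the
adic completion, by flatness. -/
lemma aux_adic_regular {R : Type*} [CommRing R] [IsDomain R] [IsNoetherianRing R]
    (I : Ideal R) {ϖ : R} (hϖ : ϖ ≠ 0) :
    ∀ x : AdicCompletion I R, algebraMap R (AdicCompletion I R) ϖ * x = 0 → x = 0 := by
  have hR : IsSMulRegular R ϖ := fun x y h => mul_left_cancel₀ hϖ (by simpa [smul_eq_mul] using h)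
  have h1 : IsSMulRegular ((AdicCompletion I R) ⊗[R] R) ϖ := hR.lTensor _
  have h2 : IsSMulRegular (AdicCompletion I R) ϖ :=
    h1.of_injective (TensorProduct.rid R (AdicCompletion I R)).symm.toLinearMap
      (TensorProduct.rid R (AdicCompletion I R)).symm.injective
  intro x h
  have h3 : ϖ • x = ϖ • (0 : AdicCompletion I R) := by
    rw [Algebra.smul_def, h, smul_zero]
  exact h2 h3

/-- A regular element stays regular after localization at a prime. -/
lemma aux_loc_regular {A : Type*} [CommRing A] (z : Ideal A) [z.IsPrime] {w : A}
    (hw : ∀ x : A, w * x = 0 → x = 0) :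
    ∀ x : Localization.AtPrime z,
      algebraMap A (Localization.AtPrime z) w * x = 0 → x = 0 := by
  intro x hx
  obtain ⟨⟨b, s⟩, hbs⟩ := IsLocalization.surj z.primeCompl x
  have h1 : algebraMap A (Localization.AtPrime z) (w * b) = 0 := by
    rw [map_mul, ← hbs, ← mul_assoc, hx, zero_mul]
  rw [IsLocalization.map_eq_zero_iff z.primeCompl] at h1
  obtain ⟨c, hc⟩ := h1
  have hb0 : (c : A) * b = 0 := by
    apply hw
    linear_combination hc
  have h2 : algebraMap A (Localization.AtPrime z) b = 0 := by
    rw [IsLocalization.map_eq_zero_iff z.primeCompl]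
    exact ⟨c, hb0⟩
  have hsu : IsUnit (algebraMap A (Localization.AtPrime z) (s : A)) :=
    IsLocalization.map_units _ s
  have h3 : x * algebraMap A (Localization.AtPrime z) (s : A) =
      0 * algebraMap A (Localization.AtPrime z) (s : A) := by
    rw [hbs, h2, zero_mul]
  exact hsu.mul_right_cancel h3

/-- Let `(R, m)` be a two-dimensional Noetherian regular local domain with `m`-adic completion
`Â`, and let `ϖ ∈ R` be a prime element such that `Â/ϖÂ` is reduced.  Let `z ⊂ Â` be a
height-one prime ideal with `z ∩ R = ϖR`.  Then for every nonzero `a ∈ R` the valuation of `a`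
in the discrete valuation ring `Â_z` equals the valuation of `a` in the discrete valuation ring
`R_{(ϖ)}`: membership in the `n`-th power of the maximal ideal is equivalent on both sides for
every `n`, i.e. the normalized discrete valuation of `Â_z` restricted to `R` coincides with the
`ϖ`-adic valuation of `R`. -/
theorem valuation_completion_restricts_to_adic_valuation
    {R : Type*} [CommRing R] [IsDomain R] [IsNoetherianRing R] [IsLocalRing R]
    (hdim : ringKrullDim R = 2)
    (hreg : ∃ x y : R, Ideal.span {x, y} = maximalIdeal R)
    (ϖ : R) (hϖ : Prime ϖ)
    (hred : IsReduced ((AdicCompletion (maximalIdeal R) R) ⧸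
      (Ideal.span {algebraMap R (AdicCompletion (maximalIdeal R) R) ϖ})))
    (z : Ideal (AdicCompletion (maximalIdeal R) R)) (hz : z.IsPrime)
    (hz1 : z ≠ ⊥ ∧ ∀ q : Ideal (AdicCompletion (maximalIdeal R) R), q.IsPrime → q < z → q = ⊥)
    (hcontr : z.comap (algebraMap R (AdicCompletion (maximalIdeal R) R)) = Ideal.span {ϖ}) :
    haveI := hz
    haveI : (Ideal.span {ϖ}).IsPrime := (Ideal.span_singleton_prime hϖ.ne_zero).mpr hϖ
    ∀ a : R, a ≠ 0 → ∀ n : ℕ,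
      ((algebraMap (AdicCompletion (maximalIdeal R) R) (Localization.AtPrime z)).comp
          (algebraMap R (AdicCompletion (maximalIdeal R) R)) a ∈
        maximalIdeal (Localization.AtPrime z) ^ n ↔
      algebraMap R (Localization.AtPrime (Ideal.span {ϖ})) a ∈
        maximalIdeal (Localization.AtPrime (Ideal.span {ϖ})) ^ n) := by
  haveI := hz
  haveI hsp : (Ideal.span {ϖ}).IsPrime := (Ideal.span_singleton_prime hϖ.ne_zero).mpr hϖ
  intro a ha n
  -- Notation
  set A := AdicCompletion (maximalIdeal R) R with hAdef
  set L := Localization.AtPrime z with hLdef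
  set L' := Localization.AtPrime (Ideal.span {ϖ}) with hL'def
  -- `ϖ` maps to a regular element of `A`
  have hregA : ∀ x : A, algebraMap R A ϖ * x = 0 → x = 0 :=
    aux_adic_regular _ hϖ.ne_zero
  haveI : Nontrivial A := by
    by_contra hnt
    rw [not_nontrivial_iff_subsingleton] at hnt
    exact hz.ne_top ((Ideal.eq_top_iff_one z).mpr
      (by rw [Subsingleton.elim (1 : A) 0]; exact z.zero_mem))
  have hϖA : algebraMap R A ϖ ∈ z := by
    have h : ϖ ∈ z.comap (algebraMap R A) := hcontr ▸ Ideal.mem_span_singleton_self ϖ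
    exact h
  have hϖA0 : algebraMap R A ϖ ≠ 0 := by
    intro h0
    exact one_ne_zero (hregA 1 (by rw [h0, zero_mul]))
  -- `z` is the unique prime of `A` contained in `z` containing `ϖ`
  have huniq : ∀ q : Ideal A, q.IsPrime → q ≤ z → algebraMap R A ϖ ∈ q → q = z := by
    intro q hq hle hmem
    by_contra h
    have hqbot := hz1.2 q hq (lt_of_le_of_ne hle h)
    rw [hqbot] at hmem
    exact hϖA0 (Ideal.mem_bot.mp hmem)
  -- Regularity in the localization
  have hregL : ∀ x : L, algebraMap A L (algebraMap R A ϖ) * x = 0 → x = 0 :=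
    aux_loc_regular z hregA
  -- The image of `ϖ` generates the maximal ideal of `L`
  have hπm : algebraMap A L (algebraMap R A ϖ) ∈ maximalIdeal L :=
    (IsLocalization.AtPrime.to_map_mem_maximal_iff L z _).mpr hϖA
  have hrad : (Ideal.span {algebraMap R A ϖ}).IsRadical :=
    (Ideal.isRadical_iff_quotient_reduced _).mpr hred
  have hspanL : Ideal.span {algebraMap A L (algebraMap R A ϖ)} = maximalIdeal L := by
    apply le_antisymm
    · rwa [Ideal.span_le, Set.singleton_subset_iff]
    · intro x hx
      -- first, `x` is in the radical of the span
      have hxrad : x ∈ (Ideal.span {algebraMap A L (algebraMap R A ϖ)}).radical := by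
        rw [Ideal.radical_eq_sInf, Ideal.mem_sInf]
        rintro J ⟨hJle, hJp⟩
        haveI := hJp
        obtain ⟨hJc, hJd⟩ := (IsLocalization.isPrime_iff_isPrime_disjoint z.primeCompl L J).mp hJp
        have hle : J.comap (algebraMap A L) ≤ z := by
          intro y hy
          by_contra hyz
          exact (Set.disjoint_left.mp hJd) hyz hy
        have hmem : algebraMap R A ϖ ∈ J.comap (algebraMap A L) := by
          rw [Ideal.mem_comap]
          exact hJle (Ideal.mem_span_singleton_self _)
        have hJz : J.comap (algebraMap A L) = z := huniq _ hJc hle hmem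
        have hmc : (J.comap (algebraMap A L)).map (algebraMap A L) = J :=
          IsLocalization.map_comap z.primeCompl L J
        rw [hJz] at hmc
        rw [← hmc, Localization.AtPrime.map_eq_maximalIdeal]
        exact hx
      obtain ⟨m, hm⟩ := hxrad
      have hm0 : m ≠ 0 := by
        intro h0
        rw [h0, pow_zero] at hm
        have h1 : (1 : L) ∈ maximalIdeal L :=
          (Ideal.span_le.mpr (Set.singleton_subset_iff.mpr hπm)) hm
        exact (IsLocalRing.mem_maximalIdeal 1).mp h1 isUnit_one
      obtain ⟨m', rfl⟩ : ∃ m', m = m' + 1 := ⟨m - 1, by omega⟩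
      -- descend the divisibility to `A`
      obtain ⟨y, hy⟩ := Ideal.mem_span_singleton.mp hm
      obtain ⟨⟨b, s⟩, hbs⟩ := IsLocalization.surj z.primeCompl x
      obtain ⟨⟨c, t⟩, hct⟩ := IsLocalization.surj z.primeCompl y
      have hkey : algebraMap A L (b ^ (m' + 1) * t) =
          algebraMap A L (algebraMap R A ϖ * c * (s : A) ^ (m' + 1)) := by
        rw [map_mul, map_pow, ← hbs, map_mul, map_mul, map_pow, ← hct]
        rw [mul_pow, hy]
        ring
      rw [IsLocalization.eq_iff_exists z.primeCompl] at hkey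
      obtain ⟨d, hd⟩ := hkey
      have hmem2 : (b * ((t : A) * (d : A))) ^ (m' + 1) ∈ Ideal.span {algebraMap R A ϖ} := by
        rw [Ideal.mem_span_singleton]
        refine ⟨(d : A) * c * (s : A) ^ (m' + 1) * ((t : A) ^ m' * (d : A) ^ m'), ?_⟩
        calc (b * ((t : A) * (d : A))) ^ (m' + 1)
            = ((d : A) * (b ^ (m' + 1) * (t : A))) * ((t : A) ^ m' * (d : A) ^ m') := by
              ring
          _ = ((d : A) * (algebraMap R A ϖ * c * (s : A) ^ (m' + 1))) *
              ((t : A) ^ m' * (d : A) ^ m') := by rw [hd]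
          _ = algebraMap R A ϖ *
              ((d : A) * c * (s : A) ^ (m' + 1) * ((t : A) ^ m' * (d : A) ^ m')) := by ring
      have hbtd : b * ((t : A) * (d : A)) ∈ Ideal.span {algebraMap R A ϖ} :=
        hrad ⟨m' + 1, hmem2⟩
      obtain ⟨e, he⟩ := Ideal.mem_span_singleton.mp hbtd
      have hunit : IsUnit (algebraMap A L ((s * (t * d) : z.primeCompl) : A)) :=
        IsLocalization.map_units L (s * (t * d))
      have hcoe : ((s * (t * d) : z.primeCompl) : A) = (s : A) * ((t : A) * (d : A)) := by
        push_cast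
        ring
      have hx2 : x * algebraMap A L ((s * (t * d) : z.primeCompl) : A) =
          algebraMap A L (algebraMap R A ϖ) * algebraMap A L e := by
        rw [hcoe, map_mul, ← mul_assoc, hbs, ← map_mul, he, map_mul]
      rw [Ideal.mem_span_singleton]
      exact (IsUnit.dvd_mul_right hunit).mp ⟨algebraMap A L e, hx2⟩
  -- the same for `L'`
  have hregL' : ∀ x : L', algebraMap R L' ϖ * x = 0 → x = 0 :=
    aux_loc_regular _ (fun x h => by
      rcases mul_eq_zero.mp h with h | h
      · exact absurd h hϖ.ne_zero
      · exact h)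
  have hspanL' : Ideal.span {algebraMap R L' ϖ} = maximalIdeal L' := by
    rw [← Localization.AtPrime.map_eq_maximalIdeal, Ideal.map_span, Set.image_singleton]
  -- factor `a`
  obtain ⟨k, b, hbd, hab⟩ := WfDvdMonoid.max_power_factor ha hϖ.irreducible
  -- units
  have hbz : algebraMap R A b ∉ z := by
    intro hmem
    apply hbd
    have : b ∈ z.comap (algebraMap R A) := hmem
    rw [hcontr] at this
    exact Ideal.mem_span_singleton.mp this
  have hbu1 : IsUnit (algebraMap A L (algebraMap R A b)) :=
    (IsLocalization.AtPrime.isUnit_to_map_iff L z _).mpr hbz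
  have hbu2 : IsUnit (algebraMap R L' b) :=
    (IsLocalization.AtPrime.isUnit_to_map_iff L' (Ideal.span {ϖ}) b).mpr
      (fun hmem => hbd (Ideal.mem_span_singleton.mp hmem))
  -- not units
  have hπnu : ¬ IsUnit (algebraMap A L (algebraMap R A ϖ)) :=
    (IsLocalRing.mem_maximalIdeal _).mp hπm
  have hπ'm : algebraMap R L' ϖ ∈ maximalIdeal L' :=
    (IsLocalization.AtPrime.to_map_mem_maximal_iff L' (Ideal.span {ϖ}) _).mpr
      (Ideal.mem_span_singleton_self ϖ)
  have hπ'nu : ¬ IsUnit (algebraMap R L' ϖ) := (IsLocalRing.mem_maximalIdeal _).mp hπ'm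
  -- rewrite both sides
  have hmapa : ((algebraMap A L).comp (algebraMap R A)) a =
      algebraMap A L (algebraMap R A ϖ) ^ k * algebraMap A L (algebraMap R A b) := by
    rw [RingHom.comp_apply, hab, map_mul, map_pow, map_mul, map_pow]
  have hmapa' : algebraMap R L' a = algebraMap R L' ϖ ^ k * algebraMap R L' b := by
    rw [hab, map_mul, map_pow]
  rw [hmapa, hmapa', ← hspanL, ← hspanL',
    aux_pow_mul_unit_mem_span_pow hπnu hregL hbu1 k n,
    aux_pow_mul_unit_mem_span_pow hπ'nu hregL' hbu2 k n]
end

section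
/- Let F be a complete discrete valuation field of characteristic 0 whose residue field is a finite field of characteristic p. Then there is a ring embedding ℚ_p → F, continuous for the valuation topologies, making F a finite-dimensional ℚ_p-vector space; that is, F is isomorphic to a finite extension of the p-adic field ℚ_p. -/
open scoped Multiplicative
open scoped NNReal
open scoped WithZero

section

namespace CDVFAux

variable {p : ℕ} [Fact p.Prime] {F : Type*} [NormedField F]

theorem A1 (hint : ∀ m : ℤ, ‖(m : F)‖ ≤ 1) (a b : ℤ) (n : ℕ)
    (h : ((a : ℤ_[p]) - (b : ℤ_[p])) ∈ Ideal.span {(p : ℤ_[p]) ^ n}) :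
    ‖(a : F) - (b : F)‖ ≤ ‖(p : F)‖ ^ n := by
  obtain ⟨c, hc⟩ : ((p : ℤ) ^ n) ∣ (a - b) := by
    have h2 : ‖((a - b : ℤ) : ℤ_[p])‖ ≤ (p : ℝ) ^ (-(n : ℤ)) := by
      rw [PadicInt.norm_le_pow_iff_mem_span_pow]
      push_cast
      exact h
    rw [PadicInt.norm_int_le_pow_iff_dvd] at h2
    exact_mod_cast h2
  have h3 : (a : F) - (b : F) = (p : F) ^ n * (c : F) := by
    have := congrArg (fun m : ℤ => (m : F)) hc
    push_cast at this
    rw [← this]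
  rw [h3, norm_mul, norm_pow]
  calc ‖(p : F)‖ ^ n * ‖(c : F)‖ ≤ ‖(p : F)‖ ^ n * 1 := by
        exact mul_le_mul_of_nonneg_left (hint c) (by positivity)
    _ = ‖(p : F)‖ ^ n := mul_one _

/-- The approximating sequence in `F` of a `p`-adic integer. -/
noncomputable def S (z : ℤ_[p]) : ℕ → F := fun n => ((z.appr n : ℕ) : F)

theorem sub_mem_span (z : ℤ_[p]) {N n m : ℕ} (hn : N ≤ n) (hm : N ≤ m) :
    ((z.appr n : ℤ_[p])) - (z.appr m : ℤ_[p]) ∈ Ideal.span {(p : ℤ_[p]) ^ N} := by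
  have h1 : z - z.appr n ∈ Ideal.span {(p : ℤ_[p]) ^ N} :=
    Ideal.span_singleton_le_span_singleton.2 (pow_dvd_pow _ hn) (PadicInt.appr_spec n z)
  have h2 : z - z.appr m ∈ Ideal.span {(p : ℤ_[p]) ^ N} :=
    Ideal.span_singleton_le_span_singleton.2 (pow_dvd_pow _ hm) (PadicInt.appr_spec m z)
  have heq : ((z.appr n : ℤ_[p])) - (z.appr m : ℤ_[p])
      = (z - z.appr m) - (z - z.appr n) := by ring
  rw [heq]
  exact Ideal.sub_mem _ h2 h1

theorem cauchy_S (hint : ∀ m : ℤ, ‖(m : F)‖ ≤ 1) (hp : ‖(p : F)‖ < 1) (z : ℤ_[p]) :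
    CauchySeq (S (F := F) z) := by
  apply cauchySeq_of_le_tendsto_0 (fun N => ‖(p : F)‖ ^ N)
  · intro n m N hn hm
    rw [dist_eq_norm]
    have hb := A1 (F := F) hint (z.appr n : ℤ) (z.appr m : ℤ) N
      (by push_cast; exact sub_mem_span z hn hm)
    simpa [S] using hb
  · exact tendsto_pow_atTop_nhds_zero_of_lt_one (norm_nonneg _) hp

section Complete

variable [CompleteSpace F]

/-- The limit in `F` of the approximating sequence of a `p`-adic integer. -/
noncomputable def glim (hint : ∀ m : ℤ, ‖(m : F)‖ ≤ 1) (hp : ‖(p : F)‖ < 1) (z : ℤ_[p]) : F :=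
  (cauchySeq_tendsto_of_complete (cauchy_S hint hp z)).choose

theorem tendsto_glim (hint : ∀ m : ℤ, ‖(m : F)‖ ≤ 1) (hp : ‖(p : F)‖ < 1) (z : ℤ_[p]) :
    Filter.Tendsto (S (F := F) z) Filter.atTop (nhds (glim hint hp z)) :=
  (cauchySeq_tendsto_of_complete (cauchy_S hint hp z)).choose_spec

theorem tendsto_of_close {S' T : ℕ → F} {L : F} (r : ℝ)
    (hT : Filter.Tendsto T Filter.atTop (nhds L))
    (hr : Filter.Tendsto (fun n => r ^ n) Filter.atTop (nhds (0 : ℝ)))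
    (hclose : ∀ n, ‖S' n - T n‖ ≤ r ^ n) :
    Filter.Tendsto S' Filter.atTop (nhds L) := by
  have h0 : Filter.Tendsto (fun n => S' n - T n) Filter.atTop (nhds (0 : F)) :=
    squeeze_zero_norm hclose hr
  have := h0.add hT
  simpa using this

end Complete



section Hom

variable [CompleteSpace F]
variable (hint : ∀ m : ℤ, ‖(m : F)‖ ≤ 1) (hp : ‖(p : F)‖ < 1)

theorem glim_close (z : ℤ_[p]) {T : ℕ → F} {L : F}
    (hT : Filter.Tendsto T Filter.atTop (nhds L))
    (hclose : ∀ n, ‖S (F := F) z n - T n‖ ≤ ‖(p : F)‖ ^ n) :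
    glim hint hp z = L :=
  tendsto_nhds_unique (tendsto_glim hint hp z)
    (tendsto_of_close _ hT (tendsto_pow_atTop_nhds_zero_of_lt_one (norm_nonneg _) hp)
      (fun n => by simpa using hclose n)) |>.symm ▸ rfl

/-- The ring homomorphism `ℤ_[p] →+* F`. -/
noncomputable def gHom : ℤ_[p] →+* F where
  toFun := glim hint hp
  map_one' := by
    apply glim_close hint hp 1 (tendsto_const_nhds (x := (1 : F)))
    intro n
    have hb := A1 (F := F) hint ((1 : ℤ_[p]).appr n : ℤ) 1 n (by
      push_cast
      have h := PadicInt.appr_spec n (1 : ℤ_[p])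
      have heq : ((1 : ℤ_[p]).appr n : ℤ_[p]) - 1 = -((1 : ℤ_[p]) - (1 : ℤ_[p]).appr n) := by ring
      rw [heq]; exact neg_mem h)
    simpa [S] using hb
  map_mul' := by
    intro x y
    apply glim_close hint hp (x * y)
      (((tendsto_glim hint hp x).mul (tendsto_glim hint hp y)))
    intro n
    have hb := A1 (F := F) hint ((x * y).appr n : ℤ) ((x.appr n : ℤ) * (y.appr n : ℤ)) n (by
      push_cast
      have h1 := PadicInt.appr_spec n x
      have h2 := PadicInt.appr_spec n y
      have h3 := PadicInt.appr_spec n (x * y)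
      have heq : ((x * y).appr n : ℤ_[p]) - (x.appr n : ℤ_[p]) * (y.appr n : ℤ_[p])
          = -((x * y) - (x * y).appr n)
            + ((x - x.appr n) * y + (x.appr n : ℤ_[p]) * (y - y.appr n)) := by ring
      rw [heq]
      exact Ideal.add_mem _ (neg_mem h3)
        (Ideal.add_mem _ (Ideal.mul_mem_right _ _ h1) (Ideal.mul_mem_left _ _ h2)))
    simpa [S] using hb
  map_zero' := by
    apply glim_close hint hp 0 (tendsto_const_nhds (x := (0 : F)))
    intro n
    have hb := A1 (F := F) hint ((0 : ℤ_[p]).appr n : ℤ) 0 n (by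
      push_cast
      have h := PadicInt.appr_spec n (0 : ℤ_[p])
      have heq : ((0 : ℤ_[p]).appr n : ℤ_[p]) - 0 = -((0 : ℤ_[p]) - (0 : ℤ_[p]).appr n) := by ring
      rw [heq]; exact neg_mem h)
    simpa [S] using hb
  map_add' := by
    intro x y
    apply glim_close hint hp (x + y)
      (((tendsto_glim hint hp x).add (tendsto_glim hint hp y)))
    intro n
    have hb := A1 (F := F) hint ((x + y).appr n : ℤ) ((x.appr n : ℤ) + (y.appr n : ℤ)) n (by
      push_cast
      have h1 := PadicInt.appr_spec n x
      have h2 := PadicInt.appr_spec n y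
      have h3 := PadicInt.appr_spec n (x + y)
      have heq : ((x + y).appr n : ℤ_[p]) - ((x.appr n : ℤ_[p]) + (y.appr n : ℤ_[p]))
          = (x - x.appr n) + (y - y.appr n) - ((x + y) - (x + y).appr n) := by ring
      rw [heq]
      exact Ideal.sub_mem _ (Ideal.add_mem _ h1 h2) h3)
    simpa [S] using hb

theorem gHom_norm_le_one (z : ℤ_[p]) : ‖gHom hint hp z‖ ≤ 1 := by
  refine le_of_tendsto' (tendsto_glim hint hp z).norm (fun n => ?_)
  simpa [S] using hint (z.appr n : ℤ)

theorem gHom_norm_unit (u : ℤ_[p]ˣ) : ‖gHom hint hp (u : ℤ_[p])‖ = 1 := by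
  have hmul : gHom hint hp (u : ℤ_[p]) * gHom hint hp ((u⁻¹ : ℤ_[p]ˣ) : ℤ_[p]) = 1 := by
    rw [← map_mul, Units.mul_inv, map_one]
  have h1 : ‖gHom hint hp (u : ℤ_[p])‖ * ‖gHom hint hp ((u⁻¹ : ℤ_[p]ˣ) : ℤ_[p])‖ = 1 := by
    rw [← norm_mul, hmul, norm_one]
  have h2 := gHom_norm_le_one hint hp (u : ℤ_[p])
  have h3 := gHom_norm_le_one hint hp ((u⁻¹ : ℤ_[p]ˣ) : ℤ_[p])
  nlinarith [norm_nonneg (gHom hint hp (u : ℤ_[p])),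
    norm_nonneg (gHom hint hp ((u⁻¹ : ℤ_[p]ˣ) : ℤ_[p]))]

theorem gHom_norm (hpnorm : ‖(p : F)‖ = (p : ℝ)⁻¹) (z : ℤ_[p]) :
    ‖gHom hint hp z‖ = ‖z‖ := by
  rcases eq_or_ne z 0 with rfl | hz
  · simp
  · have hspec := PadicInt.unitCoeff_spec hz
    conv_lhs => rw [hspec]
    rw [map_mul, map_pow, map_natCast, norm_mul, norm_pow,
      gHom_norm_unit hint hp, one_mul, hpnorm,
      PadicInt.norm_eq_zpow_neg_valuation hz, inv_pow, ← zpow_natCast (p : ℝ), ← zpow_neg]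

theorem gHom_injective (hp0 : (p : F) ≠ 0) :
    Function.Injective (gHom (F := F) hint hp) := by
  intro x y hxy
  by_contra hne
  have hz : x - y ≠ 0 := sub_ne_zero.2 hne
  have h0 : gHom hint hp (x - y) = 0 := by rw [map_sub, hxy, sub_self]
  have hspec := PadicInt.unitCoeff_spec hz
  rw [hspec, map_mul, map_pow, map_natCast] at h0
  rcases mul_eq_zero.1 h0 with h | h
  · exact ((gHom hint hp).isUnit_map (Units.isUnit _)).ne_zero h
  · exact pow_ne_zero _ hp0 h

/-- The ring homomorphism `ℚ_[p] →+* F`. -/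
noncomputable def fHom (hp0 : (p : F) ≠ 0) : ℚ_[p] →+* F :=
  IsFractionRing.lift (gHom_injective hint hp hp0)

theorem fHom_coe (hp0 : (p : F) ≠ 0) (z : ℤ_[p]) :
    fHom hint hp hp0 (z : ℚ_[p]) = gHom hint hp z := by
  rw [← PadicInt.algebraMap_apply, fHom, IsFractionRing.lift_algebraMap]

theorem fHom_norm (hp0 : (p : F) ≠ 0) (hpnorm : ‖(p : F)‖ = (p : ℝ)⁻¹) (x : ℚ_[p]) :
    ‖fHom hint hp hp0 x‖ = ‖x‖ := by
  have hp1 : (1 : ℝ) < (p : ℝ) := by exact_mod_cast (Fact.out : p.Prime).one_lt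
  obtain ⟨n, hn⟩ := pow_unbounded_of_one_lt (‖x‖) hp1
  have hppos : (0 : ℝ) < (p : ℝ) := lt_trans one_pos hp1
  have hz1 : ‖x * ((p : ℚ_[p]) ^ n)‖ ≤ 1 := by
    rw [norm_mul, norm_pow, Padic.norm_p]
    rw [inv_pow]
    rw [mul_inv_le_iff₀ (by positivity), one_mul]
    exact hn.le
  set z : ℤ_[p] := ⟨x * ((p : ℚ_[p]) ^ n), hz1⟩ with hzdef
  have key : ‖fHom hint hp hp0 x‖ * ((p : ℝ)⁻¹) ^ n = ‖x‖ * ((p : ℝ)⁻¹) ^ n := by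
    calc ‖fHom hint hp hp0 x‖ * ((p : ℝ)⁻¹) ^ n
        = ‖fHom hint hp hp0 x * (p : F) ^ n‖ := by rw [norm_mul, norm_pow, hpnorm]
      _ = ‖fHom hint hp hp0 (x * (p : ℚ_[p]) ^ n)‖ := by rw [map_mul, map_pow, map_natCast]
      _ = ‖gHom hint hp z‖ := by rw [← fHom_coe hint hp hp0 z]
      _ = ‖z‖ := gHom_norm hint hp hpnorm z
      _ = ‖x * (p : ℚ_[p]) ^ n‖ := by rw [PadicInt.norm_def]
      _ = ‖x‖ * ((p : ℝ)⁻¹) ^ n := by rw [norm_mul, norm_pow, Padic.norm_p]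
  exact mul_right_cancel₀ (pow_ne_zero _ (inv_ne_zero (ne_of_gt hppos))) key

end Hom


section MainAux

variable {p : ℕ} [Fact p.Prime] {F : Type*} [Field F] [Valued F ℤᵐ⁰]

theorem algmap_eq (d : (Valued.v : Valuation F ℤᵐ⁰).valuationSubring) :
    algebraMap (Valued.v : Valuation F ℤᵐ⁰).valuationSubring F d = (d : F) := rfl

theorem maximal_lt_one (d : (Valued.v : Valuation F ℤᵐ⁰).valuationSubring)
    (hd : d ∈ IsLocalRing.maximalIdeal (Valued.v : Valuation F ℤᵐ⁰).valuationSubring) :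
    (Valued.v : Valuation F ℤᵐ⁰) (d : F) < 1 := by
  have hOint : (Valued.v : Valuation F ℤᵐ⁰).Integers (Valued.v : Valuation F ℤᵐ⁰).valuationSubring :=
    Valuation.integer.integers _
  have hnu : ¬IsUnit d := mem_nonunits_iff.1 ((IsLocalRing.mem_maximalIdeal d).1 hd)
  refine lt_of_le_of_ne ((Valuation.mem_valuationSubring_iff _ _).1 d.2) (fun h1 => hnu ?_)
  rw [hOint.isUnit_iff_valuation_eq_one, algmap_eq]
  exact h1

end MainAux

end CDVFAux

/-- The residue field of (the valuation ring of) a valued field. -/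
noncomputable abbrev ValuedResidueField (F : Type*) [Field F] [Valued F ℤᵐ⁰] : Type _ :=
  IsLocalRing.ResidueField (Valued.v : Valuation F ℤᵐ⁰).valuationSubring

/-- Classification of mixed-characteristic local fields: if `F` is a complete discrete
valuation field of characteristic `0` whose residue field is a finite field of characteristic
`p`, then there is a ring embedding `ℚ_p → F`, continuous for the valuation topologies, making
`F` a finite-dimensional `ℚ_p`-vector space; that is, `F` is (isomorphic to) a finite extension
of the `p`-adic field `ℚ_p`. -/
theorem complete_discrete_valuation_field_mixed_char_classification
    (p : ℕ) [Fact p.Prime]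
    (F : Type*) [Field F] [Valued F ℤᵐ⁰] [CompleteSpace F] [CharZero F]
    (hsurj : Function.Surjective (Valued.v : F → ℤᵐ⁰))
    [Finite (ValuedResidueField F)]
    (hchar : CharP (ValuedResidueField F) p) :
    ∃ f : ℚ_[p] →+* F, Continuous f ∧
      (letI : Algebra ℚ_[p] F := f.toAlgebra; FiniteDimensional ℚ_[p] F) := by
  have hprime : p.Prime := Fact.out
  have hpne : (p : F) ≠ 0 := Nat.cast_ne_zero.mpr hprime.ne_zero
  -- `p` lies in the maximal ideal of the valuation ring
  have hres0 : IsLocalRing.residue (Valued.v : Valuation F ℤᵐ⁰).valuationSubring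
      ((p : ℕ) : (Valued.v : Valuation F ℤᵐ⁰).valuationSubring) = 0 := by
    have h := CharP.cast_eq_zero (ValuedResidueField F) p
    rwa [← map_natCast (IsLocalRing.residue (Valued.v : Valuation F ℤᵐ⁰).valuationSubring) p] at h
  have hplt : (Valued.v : Valuation F ℤᵐ⁰) (p : F) < 1 := by
    have h := CDVFAux.maximal_lt_one ((p : ℕ) : (Valued.v : Valuation F ℤᵐ⁰).valuationSubring)
      (Ideal.Quotient.eq_zero_iff_mem.1 hres0)
    have hc : (((p : ℕ) : (Valued.v : Valuation F ℤᵐ⁰).valuationSubring) : F) = (p : F) := by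
      push_cast; rfl
    rwa [hc] at h
  have hpvne : (Valued.v : Valuation F ℤᵐ⁰) (p : F) ≠ 0 := by
    simpa using hpne
  -- the ramification index
  obtain ⟨u, hu⟩ := WithZero.ne_zero_iff_exists.1 hpvne
  have hu1 : u < 1 := by
    rw [← WithZero.coe_lt_coe, hu, WithZero.coe_one]
    exact hplt
  have htoAdd : Multiplicative.toAdd u < 0 := by
    rwa [← ofAdd_toAdd u, ← ofAdd_zero, Multiplicative.ofAdd_lt] at hu1
  set e : ℕ := (-Multiplicative.toAdd u).toNat with he
  have hee : (e : ℤ) = -Multiplicative.toAdd u := Int.toNat_of_nonneg (by omega)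
  have hepos : 0 < e := by omega
  -- the rank-one structure and the induced norm
  set b : ℝ≥0 := (p : ℝ≥0) ^ ((e : ℝ)⁻¹) with hb
  have hb1 : 1 < b := NNReal.one_lt_rpow (by exact_mod_cast hprime.one_lt) (by positivity)
  letI rk : Valuation.RankOne (Valued.v : Valuation F ℤᵐ⁰) :=
    { hom' := (WithZeroMulInt.toNNReal (ne_zero_of_lt hb1)).comp
        MonoidWithZeroHom.ValueGroup₀.embedding
      strictMono' := (WithZeroMulInt.toNNReal_strictMono hb1).comp
        MonoidWithZeroHom.ValueGroup₀.embedding_strictMono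
      exists_val_nontrivial := ⟨(p : F), hpvne, ne_of_lt hplt⟩ }
  letI : NormedField F := Valued.toNormedField F ℤᵐ⁰
  have hpnorm : ‖(p : F)‖ = (p : ℝ)⁻¹ := by
    show ((((WithZeroMulInt.toNNReal (ne_zero_of_lt hb1)).comp
      MonoidWithZeroHom.ValueGroup₀.embedding)
      ((Valued.v : Valuation F ℤᵐ⁰).restrict (p : F)) : ℝ≥0) : ℝ) = (p : ℝ)⁻¹
    rw [MonoidWithZeroHom.comp_apply, Valuation.embedding_restrict]
    rw [← hu, WithZeroMulInt.toNNReal_neg_apply _ WithZero.coe_ne_zero]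
    have hunz : WithZero.unzero (WithZero.coe_ne_zero (a := u)) = u := by
      rw [← WithZero.coe_inj, WithZero.coe_unzero]
    rw [hunz]
    have htu : Multiplicative.toAdd u = -(e : ℤ) := by omega
    rw [htu]
    have hcalc : b ^ (-(e : ℤ)) = (p : ℝ≥0)⁻¹ := by
      rw [← NNReal.rpow_intCast b (-(e : ℤ)), hb, ← NNReal.rpow_mul]
      have hexp : (e : ℝ)⁻¹ * ((-(e : ℤ) : ℤ) : ℝ) = -1 := by
        push_cast
        field_simp
      rw [hexp, NNReal.rpow_neg_one]
    rw [hcalc]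
    simp
  have hint : ∀ m : ℤ, ‖(m : F)‖ ≤ 1 := by
    intro m
    rw [Valued.toNormedField.norm_le_one_iff]
    exact (Valuation.mem_valuationSubring_iff _ _).1
      (intCast_mem (Valued.v : Valuation F ℤᵐ⁰).valuationSubring m)
  have hplt' : ‖(p : F)‖ < 1 := by
    rw [Valued.toNormedField.norm_lt_one_iff]
    exact hplt
  refine ⟨CDVFAux.fHom hint hplt' hpne, ?_, ?_⟩
  · exact (AddMonoidHomClass.isometry_of_norm _
      (CDVFAux.fHom_norm hint hplt' hpne hpnorm)).continuous
  · letI alg : Algebra ℚ_[p] F := (CDVFAux.fHom hint hplt' hpne).toAlgebra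
    letI : NormedSpace ℚ_[p] F := by
      refine ⟨fun c x => le_of_eq ?_⟩
      rw [Algebra.smul_def, RingHom.algebraMap_toAlgebra, norm_mul,
        CDVFAux.fHom_norm hint hplt' hpne hpnorm]
    -- a uniformizer
    obtain ⟨π, hπ⟩ := hsurj (↑(Multiplicative.ofAdd (-1 : ℤ)))
    have hπvne : (Valued.v : Valuation F ℤᵐ⁰) π ≠ 0 := by
      rw [hπ]; exact WithZero.coe_ne_zero
    have hπne : π ≠ 0 := fun h => hπvne (by rw [h]; simp)
    have hπlt : ‖π‖ < 1 := by
      rw [Valued.toNormedField.norm_lt_one_iff, hπ, ← WithZero.coe_one, WithZero.coe_lt_coe,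
        ← ofAdd_zero, Multiplicative.ofAdd_lt]
      omega
    have hπpos : (0 : ℝ) < ‖π‖ := norm_pos_iff.2 hπne
    -- residue representatives
    have hres : ∃ s : Set F, s.Finite ∧ ∀ x : F, ‖x‖ ≤ 1 → ∃ y ∈ s, ‖x - y‖ ≤ ‖π‖ := by
      have hsurjres := IsLocalRing.residue_surjective
        (R := (Valued.v : Valuation F ℤᵐ⁰).valuationSubring)
      refine ⟨Set.range (fun k : ValuedResidueField F =>
        ((Function.surjInv hsurjres k : (Valued.v : Valuation F ℤᵐ⁰).valuationSubring) : F)),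
        Set.finite_range _, ?_⟩
      intro x hx
      have hxO : x ∈ (Valued.v : Valuation F ℤᵐ⁰).valuationSubring :=
        (Valuation.mem_valuationSubring_iff _ _).2 (Valued.toNormedField.norm_le_one_iff.1 hx)
      set k := IsLocalRing.residue (Valued.v : Valuation F ℤᵐ⁰).valuationSubring ⟨x, hxO⟩ with hk
      refine ⟨_, ⟨k, rfl⟩, ?_⟩
      have hdk : IsLocalRing.residue (Valued.v : Valuation F ℤᵐ⁰).valuationSubring
          (⟨x, hxO⟩ - Function.surjInv hsurjres k) = 0 := by
        rw [map_sub, Function.surjInv_eq hsurjres k, hk, sub_self]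
      have hlt : (Valued.v : Valuation F ℤᵐ⁰)
          ((⟨x, hxO⟩ - Function.surjInv hsurjres k :
            (Valued.v : Valuation F ℤᵐ⁰).valuationSubring) : F) < 1 :=
        CDVFAux.maximal_lt_one _ (Ideal.Quotient.eq_zero_iff_mem.1 hdk)
      have hlt' : (Valued.v : Valuation F ℤᵐ⁰)
          (x - ((Function.surjInv hsurjres k :
            (Valued.v : Valuation F ℤᵐ⁰).valuationSubring) : F)) < 1 := by
        simpa using hlt
      have hvle : (Valued.v : Valuation F ℤᵐ⁰)
          (x - ((Function.surjInv hsurjres k :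
            (Valued.v : Valuation F ℤᵐ⁰).valuationSubring) : F)) ≤
          (Valued.v : Valuation F ℤᵐ⁰) π := by
        rw [hπ]
        rcases eq_or_ne ((Valued.v : Valuation F ℤᵐ⁰)
          (x - ((Function.surjInv hsurjres k :
            (Valued.v : Valuation F ℤᵐ⁰).valuationSubring) : F))) 0 with h0 | h0
        · rw [h0]; exact zero_le'
        · obtain ⟨γ, hγ⟩ := WithZero.ne_zero_iff_exists.1 h0
          rw [← hγ] at hlt' ⊢
          rw [← WithZero.coe_one, WithZero.coe_lt_coe] at hlt'
          rw [WithZero.coe_le_coe]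
          have h2 : Multiplicative.toAdd γ < 0 := by
            rwa [← ofAdd_toAdd γ, ← ofAdd_zero, Multiplicative.ofAdd_lt] at hlt'
          rw [← ofAdd_toAdd γ, Multiplicative.ofAdd_le]
          omega
      rw [← Valued.toNormedField.norm_le_iff] at hvle
      exact hvle
    obtain ⟨s, hsfin, hs⟩ := hres
    -- covering at every scale
    have cov : ∀ n : ℕ, ∃ t : Set F, t.Finite ∧
        ∀ x : F, ‖x‖ ≤ 1 → ∃ y ∈ t, ‖x - y‖ ≤ ‖π‖ ^ n := by
      intro n
      induction n with
      | zero => exact ⟨{0}, Set.finite_singleton 0, fun x hx => ⟨0, rfl, by simpa using hx⟩⟩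
      | succ n ih =>
        obtain ⟨t, htfin, ht⟩ := ih
        refine ⟨(fun q : F × F => q.1 + π ^ n * q.2) '' (t ×ˢ s),
          (htfin.prod hsfin).image _, ?_⟩
        intro x hx
        obtain ⟨y, hyt, hy⟩ := ht x hx
        have hπn : π ^ n ≠ 0 := pow_ne_zero _ hπne
        set w := (x - y) / π ^ n with hw
        have hwnorm : ‖w‖ ≤ 1 := by
          rw [hw, norm_div, norm_pow, div_le_one (by positivity)]
          exact hy
        obtain ⟨z, hzs, hz⟩ := hs w hwnorm
        refine ⟨y + π ^ n * z, ⟨(y, z), ⟨hyt, hzs⟩, rfl⟩, ?_⟩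
        have hxyz : x - (y + π ^ n * z) = π ^ n * (w - z) := by
          rw [mul_sub, hw]
          field_simp
          ring
        rw [hxyz, norm_mul, norm_pow, pow_succ]
        exact mul_le_mul_of_nonneg_left hz (by positivity)
    -- compactness of the closed unit ball
    have htb : TotallyBounded (Metric.closedBall (0 : F) 1) := by
      rw [Metric.totallyBounded_iff]
      intro ε hε
      obtain ⟨n, hn⟩ := exists_pow_lt_of_lt_one hε hπlt
      obtain ⟨t, htfin, ht⟩ := cov n
      refine ⟨t, htfin, ?_⟩
      intro x hx
      rw [Metric.mem_closedBall, dist_zero_right] at hx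
      obtain ⟨y, hyt, hy⟩ := ht x hx
      exact Set.mem_biUnion hyt
        (by rw [Metric.mem_ball, dist_eq_norm]; exact lt_of_le_of_lt hy hn)
    have hcompact : IsCompact (Metric.closedBall (0 : F) 1) :=
      isCompact_iff_totallyBounded_isComplete.2 ⟨htb, Metric.isClosed_closedBall.isComplete⟩
    exact FiniteDimensional.of_isCompact_closedBall₀ ℚ_[p] one_pos hcompact

end
end
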